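/- Suppose a partial group L is the internal semidirect product of a partial subgroup X with a partial subgroup N. Then C_X(N) = {x ∈ X : n^x = n for all n ∈ N} is a partial normal subgroup of X. -/

import Mathlib

universe u v

/-- A partial group: a set `L` with a domain `D ⊆ W(L)` of words, a (total extension of the)
partial product `Pi`, and an involutory inversion, satisfying axioms (PG1)-(PG4).
The value of `Pi` outside `D` is irrelevant. -/
structure PartialGroup (L : Type u) : Type u where
  D : Set (List L)
  Pi : List L → L
  inv : L → L
  inv_inv : ∀ g, inv (inv g) = g
  singleton_mem : ∀ g, [g] ∈ D
  append_left_mem : ∀ {u v : List L}, u ++ v ∈ D → u ∈ D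
  append_right_mem : ∀ {u v : List L}, u ++ v ∈ D → v ∈ D
  Pi_singleton : ∀ g, Pi [g] = g
  pg3_mem : ∀ u v w : List L, u ++ v ++ w ∈ D → u ++ [Pi v] ++ w ∈ D
  pg3_eq : ∀ u v w : List L, u ++ v ++ w ∈ D → Pi (u ++ v ++ w) = Pi (u ++ [Pi v] ++ w)
  pg4_mem : ∀ w ∈ D, (List.map inv w).reverse ++ w ∈ D
  pg4_eq : ∀ w ∈ D, Pi ((List.map inv w).reverse ++ w) = Pi []

namespace PartialGroup

variable {L : Type u} {L' : Type v}

/-- Inversion of a word: `(g_1,...,g_k)⁻¹ = (g_k⁻¹,...,g_1⁻¹)`. -/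
def wInv (P : PartialGroup L) (w : List L) : List L := (w.map P.inv).reverse

/-- The identity `1 = Π(∅)`. -/
def one (P : PartialGroup L) : L := P.Pi []

/-- Conjugation `x^g = Π(g⁻¹, x, g)`. -/
def cnj (P : PartialGroup L) (g x : L) : L := P.Pi [P.inv g, x, g]

/-- `x ∈ D(g)`, i.e. `(g⁻¹, x, g) ∈ D(L)`. -/
def memD (P : PartialGroup L) (g x : L) : Prop := [P.inv g, x, g] ∈ P.D

/-- `H` is a partial subgroup of `L`. -/
def IsPartialSubgroup (P : PartialGroup L) (H : Set L) : Prop :=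
  H.Nonempty ∧ (∀ g ∈ H, P.inv g ∈ H) ∧ ∀ w ∈ P.D, (∀ x ∈ w, x ∈ H) → P.Pi w ∈ H

/-- `N` is a partial normal subgroup of `L`. -/
def IsPartialNormal (P : PartialGroup L) (N : Set L) : Prop :=
  P.IsPartialSubgroup N ∧ ∀ g : L, ∀ n ∈ N, P.memD g n → P.cnj g n ∈ N

/-- `H` is a subgroup of `L`: a partial subgroup with `W(H) ⊆ D(L)`. -/
def IsSubgroup (P : PartialGroup L) (H : Set L) : Prop :=
  P.IsPartialSubgroup H ∧ ∀ w : List L, (∀ x ∈ w, x ∈ H) → w ∈ P.D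

/-- Homomorphism of partial groups. -/
def IsHom (P : PartialGroup L) (P' : PartialGroup L') (φ : L → L') : Prop :=
  ∀ w ∈ P.D, w.map φ ∈ P'.D ∧ φ (P.Pi w) = P'.Pi (w.map φ)

/-- Isomorphism of partial groups: a bijective homomorphism with `D(L)^φ = D(L')`. -/
def IsIso (P : PartialGroup L) (P' : PartialGroup L') (φ : L → L') : Prop :=
  Function.Bijective φ ∧ P.IsHom P' φ ∧ List.map φ '' P.D = P'.D

end PartialGroup

open PartialGroup

/-- For a list of pairs `((x₁,n₁),...,(xₖ,nₖ))` (with `xᵢ ∈ X`, `nᵢ ∈ N`), the word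
`w_N = (n₁^{Π(x₂,...,xₖ)}, n₂^{Π(x₃,...,xₖ)}, ..., nₖ)`. -/
def sdn {L : Type u} (P : PartialGroup L) : List (L × L) → List L
  | [] => []
  | q :: rest => P.cnj (P.Pi (rest.map Prod.fst)) q.2 :: sdn P rest

/-- `L` is the internal semidirect product of the partial subgroup `X` with the partial
subgroup `N`: axioms (SD1), (SD2), (SD3). -/
structure IsIntSemidirect {L : Type u} (P : PartialGroup L) (X N : Set L) : Prop where
  subX : P.IsPartialSubgroup X
  subN : P.IsPartialSubgroup N
  sd1 : ∀ x ∈ X, (∀ n ∈ N, P.memD x n) ∧ P.cnj x '' N = N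
  sd2 : ∀ g : L, ∃! q : L × L, q.1 ∈ X ∧ q.2 ∈ N ∧ [q.1, q.2] ∈ P.D ∧ g = P.Pi [q.1, q.2]
  sd3 : ∀ q : List (L × L), (∀ r ∈ q, r.1 ∈ X ∧ r.2 ∈ N) →
      ((q.map fun r => P.Pi [r.1, r.2]) ∈ P.D ↔
        q.map Prod.fst ∈ P.D ∧ sdn P q ∈ P.D) ∧
      ((q.map fun r => P.Pi [r.1, r.2]) ∈ P.D →
        P.Pi (q.map fun r => P.Pi [r.1, r.2]) =
          P.Pi [P.Pi (q.map Prod.fst), P.Pi (sdn P q)])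


namespace PartialGroup

variable {L : Type u}

lemma nil_mem (P : PartialGroup L) : ([] : List L) ∈ P.D :=
  P.append_left_mem (u := []) (v := [P.one]) (P.singleton_mem P.one)

lemma Pi_nil (P : PartialGroup L) : P.Pi [] = P.one := rfl

lemma ins_one_mem (P : PartialGroup L) (u w : List L) (hmem : u ++ w ∈ P.D) :
    u ++ P.one :: w ∈ P.D := by
  have h2 := P.pg3_mem u [] w (by simpa using hmem)
  rw [List.append_assoc] at h2
  exact h2

lemma ins_one_eq (P : PartialGroup L) (u w : List L) (hmem : u ++ w ∈ P.D) :
    P.Pi (u ++ w) = P.Pi (u ++ P.one :: w) := by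
  have h2 := P.pg3_eq u [] w (by simpa using hmem)
  rw [List.append_assoc] at h2
  simpa [P.Pi_nil] using h2

lemma contr_mem (P : PartialGroup L) (u v w : List L) (hmem : u ++ v ++ w ∈ P.D) :
    u ++ P.Pi v :: w ∈ P.D := by
  have h2 := P.pg3_mem u v w hmem
  rw [List.append_assoc] at h2
  exact h2

lemma contr_eq (P : PartialGroup L) (u v w : List L) (hmem : u ++ v ++ w ∈ P.D) :
    P.Pi (u ++ v ++ w) = P.Pi (u ++ P.Pi v :: w) := by
  have h2 := P.pg3_eq u v w hmem
  simpa only [List.append_assoc, List.singleton_append] using h2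

lemma invg_g_mem (P : PartialGroup L) (g : L) : [P.inv g, g] ∈ P.D := by
  have := P.pg4_mem [g] (P.singleton_mem g)
  simpa using this

lemma invg_g_eq (P : PartialGroup L) (g : L) : P.Pi [P.inv g, g] = P.one := by
  have := P.pg4_eq [g] (P.singleton_mem g)
  simpa [P.Pi_nil] using this

lemma g_invg_mem (P : PartialGroup L) (g : L) : [g, P.inv g] ∈ P.D := by
  have := P.pg4_mem [P.inv g] (P.singleton_mem _)
  simpa [P.inv_inv] using this

lemma g_invg_eq (P : PartialGroup L) (g : L) : P.Pi [g, P.inv g] = P.one := by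
  have := P.pg4_eq [P.inv g] (P.singleton_mem _)
  simpa [P.inv_inv, P.Pi_nil] using this

lemma memA1 (P : PartialGroup L) (a : L) : [a, P.one] ∈ P.D :=
  P.ins_one_mem [a] [] (by simpa using P.singleton_mem a)

lemma PiA1 (P : PartialGroup L) (a : L) : P.Pi [a, P.one] = a := by
  have := P.ins_one_eq [a] [] (by simpa using P.singleton_mem a)
  simpa [P.Pi_singleton] using this.symm

lemma memA2 (P : PartialGroup L) (a : L) : [a, P.one, P.one] ∈ P.D :=
  P.ins_one_mem [a, P.one] [] (by simpa using P.memA1 a)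

lemma PiA2 (P : PartialGroup L) (a : L) : P.Pi [a, P.one, P.one] = a := by
  have := P.ins_one_eq [a, P.one] [] (by simpa using P.memA1 a)
  simp only [List.append_nil, List.cons_append, List.nil_append] at this
  rw [← this, P.PiA1]

lemma memA3 (P : PartialGroup L) (a : L) : [a, P.one, P.one, P.one] ∈ P.D :=
  P.ins_one_mem [a, P.one, P.one] [] (by simpa using P.memA2 a)

lemma PiA3 (P : PartialGroup L) (a : L) : P.Pi [a, P.one, P.one, P.one] = a := by
  have := P.ins_one_eq [a, P.one, P.one] [] (by simpa using P.memA2 a)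
  simp only [List.append_nil, List.cons_append, List.nil_append] at this
  rw [← this, P.PiA2]

lemma mem_one_cons (P : PartialGroup L) {w : List L} (hw : w ∈ P.D) : P.one :: w ∈ P.D :=
  P.ins_one_mem [] w hw

lemma Pi_one_cons (P : PartialGroup L) {w : List L} (hw : w ∈ P.D) :
    P.Pi (P.one :: w) = P.Pi w :=
  (P.ins_one_eq [] w hw).symm

lemma Pi1A (P : PartialGroup L) (a : L) : P.Pi [P.one, a] = a := by
  rw [P.Pi_one_cons (P.singleton_mem a), P.Pi_singleton]

lemma inv_one (P : PartialGroup L) : P.inv P.one = P.one := by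
  have h1 := P.ins_one_eq [P.inv P.one] [] (by simpa using P.singleton_mem (P.inv P.one))
  simp only [List.append_nil] at h1
  have h2 := P.pg4_eq [P.one] (P.singleton_mem _)
  simp at h2
  rw [P.Pi_singleton] at h1
  rw [h1]
  exact h2

lemma cnj_one_right (P : PartialGroup L) (g : L) : P.cnj g P.one = P.one := by
  unfold cnj
  have h1 := P.ins_one_eq [P.inv g] [g] (P.invg_g_mem g)
  simp only [List.cons_append, List.nil_append] at h1
  rw [← h1, P.invg_g_eq]

lemma one_cnj (P : PartialGroup L) (g : L) : P.cnj P.one g = g := by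
  unfold cnj
  rw [P.inv_one]
  have h1 := P.Pi_one_cons (P.memA1 g)
  rw [h1, P.PiA1]

end PartialGroup


section SD

variable {L : Type u} {P : PartialGroup L} {X N : Set L}

lemma sub_one_mem (hs : P.IsPartialSubgroup X) : P.one ∈ X :=
  hs.2.2 [] P.nil_mem (by simp)

lemma sd_memD (h : IsIntSemidirect P X N) {x n : L} (hx : x ∈ X) (hn : n ∈ N) :
    [P.inv x, n, x] ∈ P.D :=
  (h.sd1 x hx).1 n hn

lemma sd_cnjN (h : IsIntSemidirect P X N) {x n : L} (hx : x ∈ X) (hn : n ∈ N) :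
    P.cnj x n ∈ N := by
  have him := (h.sd1 x hx).2
  rw [← him]
  exact ⟨n, hn, rfl⟩

lemma sd_pair_mem (h : IsIntSemidirect P X N) {x n : L} (hx : x ∈ X) (hn : n ∈ N) :
    [x, n] ∈ P.D := by
  have hone_X : P.one ∈ X := sub_one_mem h.subX
  have hone_N : P.one ∈ N := sub_one_mem h.subN
  obtain ⟨hiff, -⟩ := h.sd3 [(x, P.one), (P.one, n)] (by
    intro r hr; simp at hr
    rcases hr with rfl | rfl <;> exact ⟨by assumption, by assumption⟩)
  simp only [List.map_cons, List.map_nil, sdn, P.Pi_singleton, P.Pi_nil, P.cnj_one_right,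
    P.one_cnj, P.PiA1, P.Pi1A] at hiff
  exact hiff.mpr ⟨P.memA1 x, P.mem_one_cons (P.singleton_mem n)⟩

lemma sd_comm (h : IsIntSemidirect P X N) {x n : L} (hx : x ∈ X) (hn : n ∈ N) :
    [n, x] ∈ P.D ∧ P.Pi [n, x] = P.Pi [x, P.cnj x n] := by
  have hone_X : P.one ∈ X := sub_one_mem h.subX
  have hone_N : P.one ∈ N := sub_one_mem h.subN
  obtain ⟨hiff, heq⟩ := h.sd3 [(P.one, n), (x, P.one)] (by
    intro r hr; simp at hr
    rcases hr with rfl | rfl <;> exact ⟨by assumption, by assumption⟩)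
  simp only [List.map_cons, List.map_nil, sdn, P.Pi_singleton, P.Pi_nil, P.cnj_one_right,
    P.one_cnj, P.PiA1, P.Pi1A] at hiff heq
  have hmem : [n, x] ∈ P.D := hiff.mpr ⟨P.mem_one_cons (P.singleton_mem x), P.memA1 _⟩
  exact ⟨hmem, heq hmem⟩

lemma sd_cancel (h : IsIntSemidirect P X N) {x n m : L} (hx : x ∈ X) (hn : n ∈ N) (hm : m ∈ N)
    (he : P.Pi [x, n] = P.Pi [x, m]) : n = m := by
  obtain ⟨q, -, huniq⟩ := h.sd2 (P.Pi [x, n])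
  have h1 := huniq (x, n) ⟨hx, hn, sd_pair_mem h hx hn, rfl⟩
  have h2 := huniq (x, m) ⟨hx, hm, sd_pair_mem h hx hm, he⟩
  have h3 : ((x, n) : L × L) = (x, m) := h1.trans h2.symm
  exact congrArg Prod.snd h3

lemma sd_conj_inv (h : IsIntSemidirect P X N) {x n : L} (hx : x ∈ X) (hn : n ∈ N) :
    P.cnj x (P.cnj (P.inv x) n) = n := by
  have hx' : P.inv x ∈ X := h.subX.2.1 x hx
  have hone_X : P.one ∈ X := sub_one_mem h.subX
  have hone_N : P.one ∈ N := sub_one_mem h.subN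
  set m := P.cnj (P.inv x) n with hm_def
  have hmN : m ∈ N := sd_cnjN h hx' hn
  have hm_big : [x, n, P.inv x] ∈ P.D := by
    have := sd_memD h hx' hn
    simpa [P.inv_inv] using this
  have hm_eq : m = P.Pi [x, n, P.inv x] := by
    rw [hm_def]; unfold PartialGroup.cnj; rw [P.inv_inv]
  have hxx : [x, P.inv x, x] ∈ P.D := by
    have h4 := P.pg4_mem [P.inv x, x] (P.invg_g_mem x)
    simp [P.inv_inv] at h4
    exact P.append_right_mem (u := [P.inv x]) h4
  have hxx_eq : P.Pi [x, P.inv x, x] = x := by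
    have h5 := P.contr_eq [] [x, P.inv x] [x] (by simpa using hxx)
    simp only [List.nil_append, List.cons_append, List.singleton_append] at h5
    rw [h5, P.g_invg_eq, P.Pi1A]
  obtain ⟨hiff, heq⟩ := h.sd3 [(x, n), (P.inv x, P.one), (x, P.one)] (by
    intro r hr; simp at hr
    rcases hr with rfl | rfl | rfl <;> exact ⟨by assumption, by assumption⟩)
  simp only [List.map_cons, List.map_nil, sdn, P.Pi_singleton, P.Pi_nil, P.cnj_one_right,
    P.one_cnj, P.PiA1, P.Pi1A, P.invg_g_eq, P.PiA2] at hiff heq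
  have hbig : [P.Pi [x, n], P.inv x, x] ∈ P.D := hiff.mpr ⟨hxx, P.memA2 n⟩
  have heq2 : P.Pi [P.Pi [x, n], P.inv x, x] = P.Pi [x, n] := by
    have := heq hbig
    rwa [hxx_eq] at this
  have h6 : P.Pi [x, n, P.inv x] = P.Pi [P.Pi [x, n], P.inv x] := by
    have := P.contr_eq [] [x, n] [P.inv x] (by simpa using hm_big)
    simpa only [List.nil_append, List.cons_append, List.singleton_append] using this
  have hc2 : P.Pi [P.Pi [x, n], P.inv x] = m := h6.symm.trans hm_eq.symm
  have hmx : [m, x] ∈ P.D := by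
    have := P.contr_mem [] [P.Pi [x, n], P.inv x] [x] (by simpa using hbig)
    simp only [List.nil_append, List.cons_append, List.singleton_append] at this
    rwa [hc2] at this
  have hc1 : P.Pi [m, x] = P.Pi [x, n] := by
    have h7 := P.contr_eq [] [P.Pi [x, n], P.inv x] [x] (by simpa using hbig)
    simp only [List.nil_append, List.cons_append, List.singleton_append] at h7
    rw [hc2] at h7
    exact h7.symm.trans heq2
  have hcomm := sd_comm h hx hmN
  have : P.Pi [x, P.cnj x m] = P.Pi [x, n] := hcomm.2.symm.trans hc1
  exact sd_cancel h hx (sd_cnjN h hx hmN) hn this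

end SD


section SD2

variable {L : Type u} {P : PartialGroup L} {X N : Set L}

lemma sd_mul2 (h : IsIntSemidirect P X N) {a b : L} (haX : a ∈ X) (hbX : b ∈ X)
    (hca : ∀ n ∈ N, P.cnj a n = n) (hcb : ∀ n ∈ N, P.cnj b n = n)
    (hab : [a, b] ∈ P.D) : ∀ n ∈ N, P.cnj (P.Pi [a, b]) n = n := by
  intro n hn
  have hone_X := sub_one_mem h.subX
  have hone_N := sub_one_mem h.subN
  have hzX : P.Pi [a, b] ∈ X := h.subX.2.2 [a, b] hab (by
    intro g hg; simp at hg; rcases hg with rfl | rfl <;> assumption)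
  obtain ⟨hiff1, heq1⟩ := h.sd3 [(P.one, n), (a, P.one), (b, P.one)] (by
    intro r hr; simp at hr
    rcases hr with rfl | rfl | rfl <;> exact ⟨by assumption, by assumption⟩)
  simp only [List.map_cons, List.map_nil, sdn, P.Pi_singleton, P.Pi_nil, P.cnj_one_right,
    P.one_cnj, P.PiA1, P.Pi1A, P.PiA2, P.PiA3] at hiff1 heq1
  have hnab : [n, a, b] ∈ P.D := hiff1.mpr ⟨P.mem_one_cons hab, P.memA2 _⟩
  have E1 := heq1 hnab
  rw [P.Pi_one_cons hab] at E1
  -- E1 : Pi [n,a,b] = Pi [Pi [a,b], cnj (Pi [a,b]) n]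
  have h8 : P.Pi [n, a, b] = P.Pi [P.Pi [n, a], b] := by
    have := P.contr_eq [] [n, a] [b] (by simpa using hnab)
    simpa only [List.nil_append, List.cons_append, List.singleton_append] using this
  have mem8 : [P.Pi [n, a], b] ∈ P.D := by
    have := P.contr_mem [] [n, a] [b] (by simpa using hnab)
    simpa only [List.nil_append, List.cons_append, List.singleton_append] using this
  have e_na : P.Pi [n, a] = P.Pi [a, n] := by
    have := (sd_comm h haX hn).2
    rwa [hca n hn] at this
  rw [e_na] at h8 mem8
  obtain ⟨hiff2, heq2⟩ := h.sd3 [(a, n), (b, P.one)] (by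
    intro r hr; simp at hr
    rcases hr with rfl | rfl <;> exact ⟨by assumption, by assumption⟩)
  simp only [List.map_cons, List.map_nil, sdn, P.Pi_singleton, P.Pi_nil, P.cnj_one_right,
    P.one_cnj, P.PiA1, P.Pi1A, P.PiA2, P.PiA3] at hiff2 heq2
  have E2 := heq2 mem8
  rw [hcb n hn] at E2
  -- E2 : Pi [Pi [a,n], b] = Pi [Pi [a,b], n]
  have key : P.Pi [P.Pi [a, b], P.cnj (P.Pi [a, b]) n] = P.Pi [P.Pi [a, b], n] :=
    E1.symm.trans (h8.trans E2)
  exact sd_cancel h hzX (sd_cnjN h hzX hn) hn key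

lemma sd_normal (h : IsIntSemidirect P X N) {x c : L} (hx : x ∈ X) (hcX : c ∈ X)
    (hc : ∀ n ∈ N, P.cnj c n = n) (hD : [P.inv x, c, x] ∈ P.D) :
    ∀ n ∈ N, P.cnj (P.cnj x c) n = n := by
  intro n hn
  have hone_X := sub_one_mem h.subX
  have hone_N := sub_one_mem h.subN
  have hx' : P.inv x ∈ X := h.subX.2.1 x hx
  have hdX : P.Pi [P.inv x, c, x] ∈ X := h.subX.2.2 [P.inv x, c, x] hD (by
    intro g hg; simp at hg; rcases hg with rfl | rfl | rfl <;> assumption)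
  have hmN : P.cnj (P.inv x) n ∈ N := sd_cnjN h hx' hn
  have hcx_mem : [c, x] ∈ P.D := P.append_right_mem (u := [P.inv x]) hD
  have hyX : P.Pi [c, x] ∈ X := h.subX.2.2 [c, x] hcx_mem (by
    intro g hg; simp at hg; rcases hg with rfl | rfl <;> assumption)
  -- Step i
  obtain ⟨hiff1, heq1⟩ := h.sd3 [(P.one, n), (P.inv x, P.one), (c, P.one), (x, P.one)] (by
    intro r hr; simp at hr
    rcases hr with rfl | rfl | rfl | rfl <;> exact ⟨by assumption, by assumption⟩)
  simp only [List.map_cons, List.map_nil, sdn, P.Pi_singleton, P.Pi_nil, P.cnj_one_right,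
    P.one_cnj, P.PiA1, P.Pi1A, P.PiA2, P.PiA3] at hiff1 heq1
  have hbig1 : [n, P.inv x, c, x] ∈ P.D := hiff1.mpr ⟨P.mem_one_cons hD, P.memA3 _⟩
  have E1 := heq1 hbig1
  rw [P.Pi_one_cons hD] at E1
  -- E1 : Pi [n,x',c,x] = Pi [Pi [x',c,x], cnj (Pi [x',c,x]) n]
  -- Step ii
  have h9 : P.Pi [n, P.inv x, c, x] = P.Pi [P.Pi [n, P.inv x], c, x] := by
    have := P.contr_eq [] [n, P.inv x] [c, x] (by simpa using hbig1)
    simpa only [List.nil_append, List.cons_append, List.singleton_append] using this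
  have mem9 : [P.Pi [n, P.inv x], c, x] ∈ P.D := by
    have := P.contr_mem [] [n, P.inv x] [c, x] (by simpa using hbig1)
    simpa only [List.nil_append, List.cons_append, List.singleton_append] using this
  have e_nx : P.Pi [n, P.inv x] = P.Pi [P.inv x, P.cnj (P.inv x) n] := (sd_comm h hx' hn).2
  rw [e_nx] at h9 mem9
  -- Step iii
  obtain ⟨hiff2, heq2⟩ := h.sd3 [(P.inv x, P.cnj (P.inv x) n), (c, P.one), (x, P.one)] (by
    intro r hr; simp at hr
    rcases hr with rfl | rfl | rfl <;> exact ⟨by assumption, by assumption⟩)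
  simp only [List.map_cons, List.map_nil, sdn, P.Pi_singleton, P.Pi_nil, P.cnj_one_right,
    P.one_cnj, P.PiA1, P.Pi1A, P.PiA2, P.PiA3] at hiff2 heq2
  have E2 := heq2 mem9
  -- E2 : Pi [Pi [x', m], c, x] = Pi [Pi [x',c,x], cnj (Pi [c,x]) m]
  -- Step iv: cnj (Pi [c,x]) m = cnj x m
  obtain ⟨hiff3, heq3⟩ := h.sd3 [(P.one, P.cnj (P.inv x) n), (c, P.one), (x, P.one)] (by
    intro r hr; simp at hr
    rcases hr with rfl | rfl | rfl <;> exact ⟨by assumption, by assumption⟩)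
  simp only [List.map_cons, List.map_nil, sdn, P.Pi_singleton, P.Pi_nil, P.cnj_one_right,
    P.one_cnj, P.PiA1, P.Pi1A, P.PiA2, P.PiA3] at hiff3 heq3
  have hbig3 : [P.cnj (P.inv x) n, c, x] ∈ P.D := hiff3.mpr ⟨P.mem_one_cons hcx_mem, P.memA2 _⟩
  have E3 := heq3 hbig3
  rw [P.Pi_one_cons hcx_mem] at E3
  -- E3 : Pi [m, c, x] = Pi [Pi [c,x], cnj (Pi [c,x]) m]
  have h10 : P.Pi [P.cnj (P.inv x) n, c, x] = P.Pi [P.Pi [P.cnj (P.inv x) n, c], x] := by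
    have := P.contr_eq [] [P.cnj (P.inv x) n, c] [x] (by simpa using hbig3)
    simpa only [List.nil_append, List.cons_append, List.singleton_append] using this
  have mem10 : [P.Pi [P.cnj (P.inv x) n, c], x] ∈ P.D := by
    have := P.contr_mem [] [P.cnj (P.inv x) n, c] [x] (by simpa using hbig3)
    simpa only [List.nil_append, List.cons_append, List.singleton_append] using this
  have e_mc : P.Pi [P.cnj (P.inv x) n, c] = P.Pi [c, P.cnj (P.inv x) n] := by
    have := (sd_comm h hcX hmN).2
    rwa [hc _ hmN] at this
  rw [e_mc] at h10 mem10
  obtain ⟨hiff4, heq4⟩ := h.sd3 [(c, P.cnj (P.inv x) n), (x, P.one)] (by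
    intro r hr; simp at hr
    rcases hr with rfl | rfl <;> exact ⟨by assumption, by assumption⟩)
  simp only [List.map_cons, List.map_nil, sdn, P.Pi_singleton, P.Pi_nil, P.cnj_one_right,
    P.one_cnj, P.PiA1, P.Pi1A, P.PiA2, P.PiA3] at hiff4 heq4
  have E4 := heq4 mem10
  -- E4 : Pi [Pi [c, m], x] = Pi [Pi [c,x], cnj x m]
  have key4 : P.Pi [P.Pi [c, x], P.cnj (P.Pi [c, x]) (P.cnj (P.inv x) n)]
      = P.Pi [P.Pi [c, x], P.cnj x (P.cnj (P.inv x) n)] :=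
    E3.symm.trans (h10.trans E4)
  have e_m' : P.cnj (P.Pi [c, x]) (P.cnj (P.inv x) n) = P.cnj x (P.cnj (P.inv x) n) :=
    sd_cancel h hyX (sd_cnjN h hyX hmN) (sd_cnjN h hx hmN) key4
  rw [e_m'] at E2
  -- Step v
  have key : P.Pi [P.Pi [P.inv x, c, x], P.cnj (P.Pi [P.inv x, c, x]) n]
      = P.Pi [P.Pi [P.inv x, c, x], P.cnj x (P.cnj (P.inv x) n)] :=
    E1.symm.trans (h9.trans E2)
  have final : P.cnj (P.Pi [P.inv x, c, x]) n = P.cnj x (P.cnj (P.inv x) n) :=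
    sd_cancel h hdX (sd_cnjN h hdX hn) (sd_cnjN h hx hmN) key
  rw [sd_conj_inv h hx hn] at final
  exact final

end SD2

theorem stmt14 {L : Type u} (P : PartialGroup L) (X N : Set L)
    (h : IsIntSemidirect P X N) :
    {x ∈ X | ∀ n ∈ N, P.cnj x n = n} ⊆ X ∧
    ({x ∈ X | ∀ n ∈ N, P.cnj x n = n} : Set L).Nonempty ∧
    (∀ g ∈ {x ∈ X | ∀ n ∈ N, P.cnj x n = n}, P.inv g ∈ {x ∈ X | ∀ n ∈ N, P.cnj x n = n}) ∧
    (∀ w ∈ P.D, (∀ g ∈ w, g ∈ {x ∈ X | ∀ n ∈ N, P.cnj x n = n}) →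
      P.Pi w ∈ {x ∈ X | ∀ n ∈ N, P.cnj x n = n}) ∧
    (∀ x ∈ X, ∀ c ∈ {x ∈ X | ∀ n ∈ N, P.cnj x n = n},
      P.memD x c → P.cnj x c ∈ {x ∈ X | ∀ n ∈ N, P.cnj x n = n}) := by
  refine ⟨fun g hg => hg.1, ⟨P.one, sub_one_mem h.subX, fun n _ => P.one_cnj n⟩, ?_, ?_, ?_⟩
  · rintro g ⟨hgX, hgc⟩
    refine ⟨h.subX.2.1 g hgX, fun n hn => ?_⟩
    have h1 := sd_conj_inv h hgX hn
    have h2 : P.cnj (P.inv g) n ∈ N := sd_cnjN h (h.subX.2.1 g hgX) hn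
    rw [hgc _ h2] at h1
    exact h1
  · intro w
    induction w with
    | nil =>
      intro _ _
      exact ⟨sub_one_mem h.subX, fun n _ => P.one_cnj n⟩
    | cons a t ih =>
      intro hw hall
      have ht : t ∈ P.D := P.append_right_mem (u := [a]) (v := t) hw
      have hta := ih ht (fun g hg => hall g (List.mem_cons_of_mem a hg))
      have ha := hall a List.mem_cons_self
      have hmem : [a, P.Pi t] ∈ P.D := by
        have := P.contr_mem [a] t [] (by simpa using hw)
        simpa using this
      have heqc : P.Pi (a :: t) = P.Pi [a, P.Pi t] := by
        have := P.contr_eq [a] t [] (by simpa using hw)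
        simpa using this
      rw [Set.mem_setOf_eq, heqc]
      refine ⟨h.subX.2.2 _ hmem ?_, sd_mul2 h ha.1 hta.1 ha.2 hta.2 hmem⟩
      intro g hg; simp at hg; rcases hg with rfl | rfl
      exacts [ha.1, hta.1]
  · rintro x hx c ⟨hcX, hc⟩ hDm
    exact ⟨h.subX.2.2 [P.inv x, c, x] hDm (by
        intro g hg; simp at hg; rcases hg with rfl | rfl | rfl
        exacts [h.subX.2.1 x hx, hcX, hx]),
      sd_normal h hx hcX hc hDm⟩
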